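/- Let β ≥ 0 and consider the real vector space W_β of C² solutions (x,y): ℝ → ℝ² of the system (E_β) that are 2π-anti-periodic, i.e., x(t+2π) = −x(t) and y(t+2π) = −y(t) for all t. Then dim W_β = 2 if β = β̂_{n+1/2} for some integer n ≥ 1, and dim W_β = 0 for all other β ≥ 0. -/

import Mathlib

open Real Set

noncomputable section

abbrev V := (ℝ × ℝ) × (ℝ × ℝ)

def opA (β : ℝ) : V →L[ℝ] V :=
  LinearMap.toContinuousLinearMap
  { toFun := fun p => (p.2, ((2*β+3) * p.1.1 + 2 * p.2.2, -β * p.1.2 - 2 * p.2.1))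
    map_add' := by intro x y; ext <;> simp <;> ring
    map_smul' := by intro c x; ext <;> simp <;> ring }

@[simp] lemma opA_apply (β : ℝ) (p : V) :
    opA β p = (p.2, ((2*β+3) * p.1.1 + 2 * p.2.2, -β * p.1.2 - 2 * p.2.1)) := rfl

lemma ode_unique {E : Type*} [NormedAddCommGroup E] [NormedSpace ℝ E] (L : E →L[ℝ] E)
    {f g : ℝ → E} (hf : ∀ t, HasDerivAt f (L (f t)) t) (hg : ∀ t, HasDerivAt g (L (g t)) t)
    (h0 : f 0 = g 0) : f = g := by
  funext t
  have key : EqOn f g (Icc (-(|t|+1)) (|t|+1)) := by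
    apply ODE_solution_unique_of_mem_Icc (v := fun _ x => L x) (s := fun _ => Set.univ)
      (K := ‖L‖₊) (fun _ _ => L.lipschitz.lipschitzOnWith) (t₀ := 0)
    · constructor <;> [linarith [abs_nonneg t]; linarith [abs_nonneg t]]
    · exact fun s _ => (hf s).continuousAt.continuousWithinAt
    · exact fun s _ => hf s
    · exact fun _ _ => trivial
    · exact fun s _ => (hg s).continuousAt.continuousWithinAt
    · exact fun s _ => hg s
    · exact fun _ _ => trivial
    · exact h0
  exact key ⟨by linarith [neg_abs_le t, abs_nonneg t], by linarith [le_abs_self t, abs_nonneg t]⟩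

lemma hd_exp (c r t : ℝ) : HasDerivAt (fun t => c * Real.exp (r*t)) (c*r*Real.exp (r*t)) t := by
  have h1 : HasDerivAt (fun t : ℝ => r * t) r t := by simpa using (hasDerivAt_id t).const_mul r
  simpa [mul_comm, mul_assoc, mul_left_comm] using ((Real.hasDerivAt_exp (r*t)).comp t h1).const_mul c

lemma hd_exp' (c r t : ℝ) : HasDerivAt (fun t => c * Real.exp (-(r*t))) (-(c*r)*Real.exp (-(r*t))) t := by
  have h1 : HasDerivAt (fun t : ℝ => -(r * t)) (-r) t := by
    exact (((hasDerivAt_id t).const_mul r).neg).congr_deriv (by ring)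
  have := ((Real.hasDerivAt_exp (-(r*t))).comp t h1).const_mul c
  exact this.congr_deriv (by ring)

lemma hd_cos (c θ t : ℝ) : HasDerivAt (fun t => c * Real.cos (θ*t)) (-(c*θ) * Real.sin (θ*t)) t := by
  have h1 : HasDerivAt (fun t : ℝ => θ * t) θ t := by simpa using (hasDerivAt_id t).const_mul θ
  have := ((Real.hasDerivAt_cos (θ*t)).comp t h1).const_mul c
  exact this.congr_deriv (by ring)

lemma hd_sin (c θ t : ℝ) : HasDerivAt (fun t => c * Real.sin (θ*t)) (c*θ * Real.cos (θ*t)) t := by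
  have h1 : HasDerivAt (fun t : ℝ => θ * t) θ t := by simpa using (hasDerivAt_id t).const_mul θ
  have := ((Real.hasDerivAt_sin (θ*t)).comp t h1).const_mul c
  exact this.congr_deriv (by ring)

def w1 (β r : ℝ) : ℝ → V := fun t =>
  (((r^2+β) * Real.exp (r*t), -(2*r) * Real.exp (r*t)),
   (r*(r^2+β) * Real.exp (r*t), -(2*r^2) * Real.exp (r*t)))

def w2 (β r : ℝ) : ℝ → V := fun t =>
  (((r^2+β) * Real.exp (-(r*t)), (2*r) * Real.exp (-(r*t))),
   (-(r*(r^2+β)) * Real.exp (-(r*t)), -(2*r^2) * Real.exp (-(r*t))))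

def w3 (β θ : ℝ) : ℝ → V := fun t =>
  (((β-θ^2) * Real.cos (θ*t), (2*θ) * Real.sin (θ*t)),
   (-((β-θ^2)*θ) * Real.sin (θ*t), (2*θ^2) * Real.cos (θ*t)))

def w4 (β θ : ℝ) : ℝ → V := fun t =>
  (((β-θ^2) * Real.sin (θ*t), -(2*θ) * Real.cos (θ*t)),
   ((β-θ^2)*θ * Real.cos (θ*t), (2*θ^2) * Real.sin (θ*t)))

section pos
variable {β θ r : ℝ} (hθ : θ^4 + (β-1)*θ^2 = β*(2*β+3)) (hr : r^2 = θ^2 + β - 1)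

include hθ hr in
lemma hd_w1 : ∀ t, HasDerivAt (w1 β r) (opA β (w1 β r t)) t := by
  intro t
  have h := (((hd_exp (r^2+β) r t).prodMk (hd_exp (-(2*r)) r t)).prodMk
    ((hd_exp (r*(r^2+β)) r t).prodMk (hd_exp (-(2*r^2)) r t)))
  refine h.congr_deriv (Eq.symm ?_)
  rw [opA_apply]
  refine Prod.ext (Prod.ext ?_ ?_) (Prod.ext ?_ ?_) <;> simp only [w1, opA_apply]
  · ring
  · ring
  · linear_combination (-Real.exp (r*t)) * ((r^2+θ^2) * hr + hθ)
  · ring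

include hθ hr in
lemma hd_w2 : ∀ t, HasDerivAt (w2 β r) (opA β (w2 β r t)) t := by
  intro t
  have h := (((hd_exp' (r^2+β) r t).prodMk (hd_exp' (2*r) r t)).prodMk
    ((hd_exp' (-(r*(r^2+β))) r t).prodMk (hd_exp' (-(2*r^2)) r t)))
  refine h.congr_deriv (Eq.symm ?_)
  rw [opA_apply]
  refine Prod.ext (Prod.ext ?_ ?_) (Prod.ext ?_ ?_) <;> simp only [w2, opA_apply]
  · ring
  · ring
  · linear_combination (-Real.exp (-(r*t))) * ((r^2+θ^2) * hr + hθ)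
  · ring

include hθ in
lemma hd_w3 : ∀ t, HasDerivAt (w3 β θ) (opA β (w3 β θ t)) t := by
  intro t
  have h := (((hd_cos (β-θ^2) θ t).prodMk (hd_sin (2*θ) θ t)).prodMk
    ((hd_sin (-((β-θ^2)*θ)) θ t).prodMk (hd_cos (2*θ^2) θ t)))
  refine h.congr_deriv (Eq.symm ?_)
  rw [opA_apply]
  refine Prod.ext (Prod.ext ?_ ?_) (Prod.ext ?_ ?_) <;> simp only [w3, opA_apply]
  · ring
  · linear_combination (-Real.cos (θ*t)) * hθ
  · ring

include hθ in
lemma hd_w4 : ∀ t, HasDerivAt (w4 β θ) (opA β (w4 β θ t)) t := by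
  intro t
  have h := (((hd_sin (β-θ^2) θ t).prodMk (hd_cos (-(2*θ)) θ t)).prodMk
    ((hd_cos ((β-θ^2)*θ) θ t).prodMk (hd_sin (2*θ^2) θ t)))
  refine h.congr_deriv (Eq.symm ?_)
  rw [opA_apply]
  refine Prod.ext (Prod.ext ?_ ?_) (Prod.ext ?_ ?_) <;> simp only [w4, opA_apply]
  · ring
  · linear_combination (-Real.sin (θ*t)) * hθ
  · ring


include hθ hr in
lemma sol_eq_comb (hβ : 0 < β) (hθpos : 0 < θ) (hrpos : 0 < r)
    {g : ℝ → V} (hg : ∀ t, HasDerivAt g (opA β (g t)) t) :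
    ∃ c : Fin 4 → ℝ, ∀ t,
      g t = c 0 • w1 β r t + c 1 • w2 β r t + c 2 • w3 β θ t + c 3 • w4 β θ t := by
  set F : Fin 4 → ℝ → V := ![w1 β r, w2 β r, w3 β θ, w4 β θ] with hF
  have hdF : ∀ i t, HasDerivAt (F i) (opA β (F i t)) t := by
    intro i
    fin_cases i
    · exact hd_w1 hθ hr
    · exact hd_w2 hθ hr
    · exact hd_w3 hθ
    · exact hd_w4 hθ
  have hli : LinearIndependent ℝ (fun i => F i 0) := by
    rw [Fintype.linearIndependent_iff]
    intro c hc
    have hexp : Real.exp (r * 0) = 1 := by norm_num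
    simp only [hF, Fin.sum_univ_four, Matrix.cons_val_zero, Matrix.cons_val_one, Matrix.head_cons,
      Matrix.cons_val_two, Matrix.tail_cons, Matrix.cons_val_three, w1, w2, w3, w4,
      mul_zero, neg_zero, Real.exp_zero, Real.cos_zero, Real.sin_zero, mul_one,
      Prod.smul_mk, smul_eq_mul, Prod.mk_add_mk, Prod.mk_eq_zero] at hc
    obtain ⟨⟨e1, e2⟩, e3, e4⟩ := hc
    have k1 : 2*β*(θ^2+r^2) * (c 0 + c 1) = 0 := by linear_combination (2*θ^2) * e1 - (β - θ^2) * e4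
    have hpos1 : 2*β*(θ^2+r^2) ≠ 0 := by positivity
    have hc01 : c 0 + c 1 = 0 := by
      rcases mul_eq_zero.mp k1 with h | h
      · exact absurd h hpos1
      · exact h
    have k2 : 2*r*(r^2+θ^2) * (c 0 - c 1) = 0 := by linear_combination 2 * e3 + (β - θ^2) * e2
    have hpos2 : 2*r*(r^2+θ^2) ≠ 0 := by positivity
    have hc01' : c 0 - c 1 = 0 := by
      rcases mul_eq_zero.mp k2 with h | h
      · exact absurd h hpos2
      · exact h
    have hc0 : c 0 = 0 := by linarith
    have hc1 : c 1 = 0 := by linarith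
    have hc2 : c 2 = 0 := by
      have : 2*θ^2 * c 2 = 0 := by linear_combination e4 + 2*r^2*hc0 + 2*r^2*hc1
      rcases mul_eq_zero.mp this with h | h
      · exact absurd h (by positivity)
      · exact h
    have hc3 : c 3 = 0 := by
      have : (-(2*θ)) * c 3 = 0 := by linear_combination e2 + 2*r*hc0 - 2*r*hc1
      rcases mul_eq_zero.mp this with h | h
      · have : (2:ℝ)*θ ≠ 0 := by positivity
        exact absurd h (by simpa using this)
      · exact h
    intro i
    fin_cases i <;> assumption
  have htop : Submodule.span ℝ (Set.range (fun i => F i 0)) = ⊤ := by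
    apply Submodule.eq_top_of_finrank_eq
    rw [finrank_span_eq_card hli]
    simp
  have hmem : g 0 ∈ Submodule.span ℝ (Set.range (fun i => F i 0)) := htop ▸ Submodule.mem_top
  obtain ⟨c, hc⟩ := (Submodule.mem_span_range_iff_exists_fun ℝ).mp hmem
  refine ⟨c, ?_⟩
  have hG : ∀ t, HasDerivAt (fun t => ∑ i, c i • F i t) (opA β (∑ i, c i • F i t)) t := by
    intro t
    have h := HasDerivAt.sum (fun i (_ : i ∈ Finset.univ) => (hdF i t).const_smul (c i))
    exact h.congr_deriv (by simp [map_sum, map_smul])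
  have := ode_unique (opA β) hg hG (by rw [← hc])
  intro t
  have ht := congrFun this t
  rw [ht]
  simp [Fin.sum_univ_four, hF]

end pos

lemma w1_shift (β r t : ℝ) : w1 β r (t + 2*π) = Real.exp (r*(2*π)) • w1 β r t := by
  simp only [w1, Prod.smul_mk, smul_eq_mul,
    show r*(t+2*π) = r*t + r*(2*π) from by ring, Real.exp_add]
  refine Prod.ext (Prod.ext ?_ ?_) (Prod.ext ?_ ?_) <;> ring

lemma w2_shift (β r t : ℝ) : w2 β r (t + 2*π) = Real.exp (-(r*(2*π))) • w2 β r t := by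
  simp only [w2, Prod.smul_mk, smul_eq_mul,
    show -(r*(t+2*π)) = -(r*t) + -(r*(2*π)) from by ring, Real.exp_add]
  refine Prod.ext (Prod.ext ?_ ?_) (Prod.ext ?_ ?_) <;> ring

lemma w3_shift (β θ t : ℝ) : w3 β θ (t + 2*π) =
    Real.cos (θ*(2*π)) • w3 β θ t + (-Real.sin (θ*(2*π))) • w4 β θ t := by
  simp only [w3, w4, Prod.smul_mk, smul_eq_mul, Prod.mk_add_mk,
    show θ*(t+2*π) = θ*t + θ*(2*π) from by ring, Real.cos_add, Real.sin_add]
  refine Prod.ext (Prod.ext ?_ ?_) (Prod.ext ?_ ?_) <;> ring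

lemma w4_shift (β θ t : ℝ) : w4 β θ (t + 2*π) =
    Real.sin (θ*(2*π)) • w3 β θ t + Real.cos (θ*(2*π)) • w4 β θ t := by
  simp only [w3, w4, Prod.smul_mk, smul_eq_mul, Prod.mk_add_mk,
    show θ*(t+2*π) = θ*t + θ*(2*π) from by ring, Real.cos_add, Real.sin_add]
  refine Prod.ext (Prod.ext ?_ ?_) (Prod.ext ?_ ?_) <;> ring

section pos2
variable {β θ r : ℝ} (hθ2 : θ^4 + (β-1)*θ^2 = β*(2*β+3)) (hr2 : r^2 = θ^2 + β - 1)

include hθ2 hr2 in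
lemma antiper_coeffs (hβ : 0 < β) (hθpos : 0 < θ) (hrpos : 0 < r)
    {g : ℝ → V} (hg : ∀ t, HasDerivAt g (opA β (g t)) t)
    (hap : ∀ t, g (t + 2*π) = -g t) :
    ∃ c3 c4 : ℝ, (∀ t, g t = c3 • w3 β θ t + c4 • w4 β θ t) ∧
      (Real.cos (θ*(2*π)) ≠ -1 → c3 = 0 ∧ c4 = 0) := by
  obtain ⟨c, hc⟩ := sol_eq_comb hθ2 hr2 hβ hθpos hrpos hg
  set E := Real.exp (r*(2*π)) with hE
  set E' := Real.exp (-(r*(2*π))) with hE'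
  set C := Real.cos (θ*(2*π)) with hC
  set S := Real.sin (θ*(2*π)) with hS
  -- the key linear relation at time 0
  have key : (c 0 * (E+1)) • w1 β r 0 + (c 1 * (E'+1)) • w2 β r 0
      + (c 2 * (C+1) + c 3 * S) • w3 β θ 0 + (c 3 * (C+1) - c 2 * S) • w4 β θ 0 = 0 := by
    have h0 := hap 0
    rw [hc (0 + 2*π), hc 0, w1_shift, w2_shift, w3_shift, w4_shift] at h0
    linear_combination (norm := module) h0
  -- independence of the initial vectors (recomputed inline via the same proof as in sol_eq_comb)
  have hli : LinearIndependent ℝ (fun i => (![w1 β r, w2 β r, w3 β θ, w4 β θ] : Fin 4 → ℝ → V) i 0) := by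
    rw [Fintype.linearIndependent_iff]
    intro d hd
    simp only [Fin.sum_univ_four, Matrix.cons_val_zero, Matrix.cons_val_one, Matrix.head_cons,
      Matrix.cons_val_two, Matrix.tail_cons, Matrix.cons_val_three, w1, w2, w3, w4,
      mul_zero, neg_zero, Real.exp_zero, Real.cos_zero, Real.sin_zero, mul_one,
      Prod.smul_mk, smul_eq_mul, Prod.mk_add_mk, Prod.mk_eq_zero] at hd
    obtain ⟨⟨e1, e2⟩, e3, e4⟩ := hd
    have k1 : 2*β*(θ^2+r^2) * (d 0 + d 1) = 0 := by linear_combination (2*θ^2) * e1 - (β - θ^2) * e4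
    have hc01 : d 0 + d 1 = 0 := by
      rcases mul_eq_zero.mp k1 with h | h
      · exact absurd h (by positivity)
      · exact h
    have k2 : 2*r*(r^2+θ^2) * (d 0 - d 1) = 0 := by linear_combination 2 * e3 + (β - θ^2) * e2
    have hc01' : d 0 - d 1 = 0 := by
      rcases mul_eq_zero.mp k2 with h | h
      · exact absurd h (by positivity)
      · exact h
    have hc0 : d 0 = 0 := by linarith
    have hc1 : d 1 = 0 := by linarith
    have hc2 : d 2 = 0 := by
      have : 2*θ^2 * d 2 = 0 := by linear_combination e4 + 2*r^2*hc0 + 2*r^2*hc1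
      rcases mul_eq_zero.mp this with h | h
      · exact absurd h (by positivity)
      · exact h
    have hc3 : d 3 = 0 := by
      have h2 : (-(2*θ)) * d 3 = 0 := by linear_combination e2 + 2*r*hc0 - 2*r*hc1
      rcases mul_eq_zero.mp h2 with h | h
      · have h3 : (2:ℝ)*θ ≠ 0 := by positivity
        exact absurd h (by simpa using h3)
      · exact h
    intro i
    fin_cases i <;> assumption
  have hzero := Fintype.linearIndependent_iff.mp hli
    ![c 0 * (E+1), c 1 * (E'+1), c 2 * (C+1) + c 3 * S, c 3 * (C+1) - c 2 * S]
    (by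
      rw [Fin.sum_univ_four]
      simpa using key)
  have hd0 := hzero 0
  have hd1 := hzero 1
  have hd2 := hzero 2
  have hd3 := hzero 3
  simp only [Matrix.cons_val_zero, Matrix.cons_val_one, Matrix.head_cons,
    Matrix.cons_val_two, Matrix.tail_cons, Matrix.cons_val_three] at hd0 hd1 hd2 hd3
  have hc0 : c 0 = 0 := by
    rcases mul_eq_zero.mp hd0 with h | h
    · exact h
    · exact absurd h (by positivity)
  have hc1 : c 1 = 0 := by
    rcases mul_eq_zero.mp hd1 with h | h
    · exact h
    · exact absurd h (by positivity)
  refine ⟨c 2, c 3, ?_, ?_⟩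
  · intro t
    rw [hc t, hc0, hc1]
    module
  · intro hCne
    have hCpos : C + 1 ≠ 0 := by
      intro h
      exact hCne (by linarith)
    have hsq : S^2 + C^2 = 1 := Real.sin_sq_add_cos_sq _
    have hc2 : c 2 = 0 := by
      have : (2 + 2*C) * c 2 = 0 := by linear_combination (C+1) * hd2 - S * hd3 - c 2 * hsq
      rcases mul_eq_zero.mp this with h | h
      · exact absurd h (by intro h'; apply hCpos; linarith)
      · exact h
    have hc3 : c 3 = 0 := by
      have : c 3 * (C+1) = 0 := by linear_combination hd3 + S * hc2
      rcases mul_eq_zero.mp this with h | h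
      · exact h
      · exact absurd h hCpos
    exact ⟨hc2, hc3⟩

end pos2

def sol (β : ℝ) : Set (ℝ → ℝ × ℝ) :=
  {f : ℝ → ℝ × ℝ | ContDiff ℝ 2 f ∧ (∀ t, f (t + 2 * Real.pi) = -f t) ∧
    ∀ t, (deriv (deriv f) t).1 = (2 * β + 3) * (f t).1 + 2 * (deriv f t).2 ∧
         (deriv (deriv f) t).2 = -β * (f t).2 - 2 * (deriv f t).1}

lemma hasDerivAt_fst {E F : Type*} [NormedAddCommGroup E] [NormedSpace ℝ E]
    [NormedAddCommGroup F] [NormedSpace ℝ F]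
    {f : ℝ → E × F} {v : E × F} {t : ℝ} (h : HasDerivAt f v t) :
    HasDerivAt (fun s => (f s).1) v.1 t :=
  (ContinuousLinearMap.fst ℝ E F).hasFDerivAt.comp_hasDerivAt t h

lemma hasDerivAt_snd {E F : Type*} [NormedAddCommGroup E] [NormedSpace ℝ E]
    [NormedAddCommGroup F] [NormedSpace ℝ F]
    {f : ℝ → E × F} {v : E × F} {t : ℝ} (h : HasDerivAt f v t) :
    HasDerivAt (fun s => (f s).2) v.2 t :=
  (ContinuousLinearMap.snd ℝ E F).hasFDerivAt.comp_hasDerivAt t h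

/-- From a member of `sol β`, produce the first-order system solution. -/
lemma sol_to_g {β : ℝ} {f : ℝ → ℝ × ℝ} (hf : f ∈ sol β) :
    (∀ t, HasDerivAt (fun s => (f s, deriv f s)) (opA β (f t, deriv f t)) t) ∧
    (∀ t, ((f (t + 2*π), deriv f (t + 2*π)) : V) = -(f t, deriv f t)) := by
  obtain ⟨hsm, hap, hode⟩ := hf
  have h2 : (2 : WithTop ℕ∞) = 1 + 1 := rfl
  have hsm' := hsm
  rw [h2, contDiff_succ_iff_deriv] at hsm'
  obtain ⟨hdiff, -, hsm1⟩ := hsm'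
  have hdiff1 : Differentiable ℝ (deriv f) := hsm1.differentiable one_ne_zero
  have hda : ∀ t, HasDerivAt f (deriv f t) t := fun t => (hdiff t).hasDerivAt
  have hda1 : ∀ t, HasDerivAt (deriv f) (deriv (deriv f) t) t := fun t => (hdiff1 t).hasDerivAt
  constructor
  · intro t
    have h := (hda t).prodMk (hda1 t)
    have he : (deriv f t, deriv (deriv f) t) = opA β (f t, deriv f t) := by
      rw [opA_apply]
      refine Prod.ext rfl (Prod.ext ?_ ?_)
      · exact (hode t).1
      · exact (hode t).2
    rwa [he] at h
  · intro t
    have hder_ap : deriv f (t + 2*π) = -deriv f t := by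
      have hL : HasDerivAt (fun s => f (s + 2*π)) ((1:ℝ) • deriv f (t + 2*π)) t :=
        (hda (t + 2*π)).scomp t ((hasDerivAt_id t).add_const (2*π))
      have hL' : HasDerivAt (fun s => -f s) ((1:ℝ) • deriv f (t + 2*π)) t := by
        have : (fun s => f (s + 2*π)) = fun s => -f s := funext fun s => hap s
        rwa [this] at hL
      have hR : HasDerivAt (fun s => -f s) (-deriv f t) t := (hda t).neg
      have := hL'.unique hR
      simpa using this
    exact Prod.ext (hap t) hder_ap

/-- Conversely, a globally anti-periodic solution of the system gives a member of `sol β`. -/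
lemma g_to_sol {β : ℝ} {g : ℝ → V} (hg : ∀ t, HasDerivAt g (opA β (g t)) t)
    (hap : ∀ t, g (t + 2*π) = -g t) : (fun t => (g t).1) ∈ sol β := by
  have hdf : ∀ t, HasDerivAt (fun s => (g s).1) ((g t).2) t := fun t => hasDerivAt_fst (hg t)
  have hderiv_f : deriv (fun s => (g s).1) = fun t => (g t).2 := funext fun t => (hdf t).deriv
  have hdf2 : ∀ t, HasDerivAt (fun s => (g s).2) ((opA β (g t)).2) t := fun t => hasDerivAt_snd (hg t)
  have hderiv2 : deriv (deriv (fun s => (g s).1)) = fun t => (opA β (g t)).2 := by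
    rw [hderiv_f]; exact funext fun t => (hdf2 t).deriv
  have hgdiff : Differentiable ℝ g := fun t => (hg t).differentiableAt
  have hgc : Continuous g := hgdiff.continuous
  refine ⟨?_, ?_, ?_⟩
  · have h2 : (2 : WithTop ℕ∞) = 1 + 1 := rfl
    rw [h2, contDiff_succ_iff_deriv]
    refine ⟨fun t => (hdf t).differentiableAt, by simp, ?_⟩
    rw [hderiv_f, contDiff_one_iff_deriv]
    constructor
    · exact fun t => (hdf2 t).differentiableAt
    · have : deriv (fun t => (g t).2) = fun t => (opA β (g t)).2 := funext fun t => (hdf2 t).deriv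
      rw [this]
      exact (((opA β).continuous.comp hgc)).snd
  · intro t
    have := hap t
    simp only [this, Prod.fst_neg]
  · intro t
    rw [hderiv2, hderiv_f]
    exact ⟨rfl, rfl⟩

def v1 : ℝ → V := fun _ => ((0,1),(0,0))
def v2 : ℝ → V := fun t => ((2,-3*t),(0,-3))

lemma hd_v1 : ∀ t : ℝ, HasDerivAt v1 (opA 0 (v1 t)) t := by
  intro t
  have h : HasDerivAt v1 0 t := hasDerivAt_const t _
  convert h using 1
  rw [opA_apply]
  refine Prod.ext (Prod.ext ?_ ?_) (Prod.ext ?_ ?_) <;> simp [v1]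

lemma hd_v2 : ∀ t : ℝ, HasDerivAt v2 (opA 0 (v2 t)) t := by
  intro t
  have h : HasDerivAt v2 (((0:ℝ),(-3:ℝ)*1),((0:ℝ),(0:ℝ))) t := by
    refine HasDerivAt.prodMk (HasDerivAt.prodMk ?_ ?_) (HasDerivAt.prodMk ?_ ?_)
    · exact hasDerivAt_const t _
    · exact (hasDerivAt_id t).const_mul (-3)
    · exact hasDerivAt_const t _
    · exact hasDerivAt_const t _
  convert h using 1
  rw [opA_apply]
  refine Prod.ext (Prod.ext ?_ ?_) (Prod.ext ?_ ?_) <;> simp [v2] <;> ring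

lemma hθ0 : (1:ℝ)^4 + ((0:ℝ)-1)*1^2 = 0*(2*0+3) := by norm_num

lemma zero_case {g : ℝ → V} (hg : ∀ t, HasDerivAt g (opA 0 (g t)) t)
    (hap : ∀ t, g (t + 2*π) = -g t) : ∀ t, g t = 0 := by
  set F : Fin 4 → ℝ → V := ![v1, v2, w3 0 1, w4 0 1] with hF
  have hdF : ∀ i t, HasDerivAt (F i) (opA 0 (F i t)) t := by
    intro i
    fin_cases i
    · exact hd_v1
    · exact hd_v2
    · exact hd_w3 hθ0
    · exact hd_w4 hθ0
  have hli : LinearIndependent ℝ (fun i => F i 0) := by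
    rw [Fintype.linearIndependent_iff]
    intro c hc
    simp only [hF, Fin.sum_univ_four, Matrix.cons_val_zero, Matrix.cons_val_one, Matrix.head_cons,
      Matrix.cons_val_two, Matrix.tail_cons, Matrix.cons_val_three, v1, v2, w3, w4,
      mul_zero, neg_zero, Real.cos_zero, Real.sin_zero, mul_one,
      Prod.smul_mk, smul_eq_mul, Prod.mk_add_mk, Prod.mk_eq_zero] at hc
    obtain ⟨⟨e1, e2⟩, e3, e4⟩ := hc
    have hc3 : c 3 = 0 := by linarith
    have hc0 : c 0 = 0 := by linarith
    have hc1 : c 1 = 0 := by linarith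
    have hc2 : c 2 = 0 := by linarith
    intro i
    fin_cases i <;> assumption
  have htop : Submodule.span ℝ (Set.range (fun i => F i 0)) = ⊤ := by
    apply Submodule.eq_top_of_finrank_eq
    rw [finrank_span_eq_card hli]
    simp
  have hmem : g 0 ∈ Submodule.span ℝ (Set.range (fun i => F i 0)) := htop ▸ Submodule.mem_top
  obtain ⟨c, hc⟩ := (Submodule.mem_span_range_iff_exists_fun ℝ).mp hmem
  have hG : ∀ t, HasDerivAt (fun t => ∑ i, c i • F i t) (opA 0 (∑ i, c i • F i t)) t := by
    intro t
    have h := HasDerivAt.sum (fun i (_ : i ∈ Finset.univ) => (hdF i t).const_smul (c i))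
    exact h.congr_deriv (by simp [map_sum, map_smul])
  have heq := ode_unique (opA 0) hg hG (by rw [← hc])
  have hrep : ∀ t, g t = c 0 • v1 t + c 1 • v2 t + c 2 • w3 0 1 t + c 3 • w4 0 1 t := by
    intro t
    have ht := congrFun heq t
    rw [ht]
    simp [Fin.sum_univ_four, hF]
  -- shift relations
  have hv2s : ∀ t : ℝ, v2 (t + 2*π) = v2 t + (-(6*π)) • v1 t := by
    intro t
    simp only [v1, v2, Prod.smul_mk, smul_eq_mul, Prod.mk_add_mk]
    refine Prod.ext (Prod.ext ?_ ?_) (Prod.ext ?_ ?_) <;> ring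
  have hw3s : ∀ t : ℝ, w3 0 1 (t + 2*π) = w3 0 1 t := by
    intro t
    have := w3_shift 0 1 t
    simpa [Real.cos_two_pi, Real.sin_two_pi] using this
  have hw4s : ∀ t : ℝ, w4 0 1 (t + 2*π) = w4 0 1 t := by
    intro t
    have := w4_shift 0 1 t
    simpa [Real.cos_two_pi, Real.sin_two_pi] using this
  have key : (2 * c 0 - 6*π*c 1) • v1 0 + (2 * c 1) • v2 0
      + (2 * c 2) • w3 0 1 0 + (2 * c 3) • w4 0 1 0 = 0 := by
    have h0 := hap 0
    rw [hrep (0 + 2*π), hrep 0, hv2s, hw3s, hw4s] at h0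
    have h1 : v1 (0 + 2*π) = v1 0 := rfl
    rw [h1] at h0
    linear_combination (norm := module) h0
  have hzero := Fintype.linearIndependent_iff.mp hli
    ![2 * c 0 - 6*π*c 1, 2 * c 1, 2 * c 2, 2 * c 3]
    (by rw [Fin.sum_univ_four]; simpa [hF] using key)
  have h0 := hzero 0
  have h1 := hzero 1
  have h2 := hzero 2
  have h3 := hzero 3
  simp only [Matrix.cons_val_zero, Matrix.cons_val_one, Matrix.head_cons,
    Matrix.cons_val_two, Matrix.tail_cons, Matrix.cons_val_three] at h0 h1 h2 h3
  have hc1 : c 1 = 0 := by linarith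
  have hc0 : c 0 = 0 := by
    have := h0
    rw [hc1] at this
    linarith
  have hc2 : c 2 = 0 := by linarith
  have hc3 : c 3 = 0 := by linarith
  intro t
  rw [hrep t, hc0, hc1, hc2, hc3]
  simp

def f3 (β θ : ℝ) : ℝ → ℝ × ℝ := fun t => (w3 β θ t).1
def f4 (β θ : ℝ) : ℝ → ℝ × ℝ := fun t => (w4 β θ t).1

section res
variable {β θ r : ℝ}

lemma sin_shift_zero (hC : Real.cos (θ*(2*π)) = -1) : Real.sin (θ*(2*π)) = 0 := by
  have h := Real.sin_sq_add_cos_sq (θ*(2*π))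
  rw [hC] at h
  have : Real.sin (θ*(2*π))^2 = 0 := by nlinarith
  exact pow_eq_zero_iff (by norm_num) |>.mp this

lemma f34_mem (hθ2 : θ^4 + (β-1)*θ^2 = β*(2*β+3)) (hC : Real.cos (θ*(2*π)) = -1) :
    f3 β θ ∈ sol β ∧ f4 β θ ∈ sol β := by
  have hS := sin_shift_zero hC
  have h3ap : ∀ t, w3 β θ (t + 2*π) = -(w3 β θ t) := by
    intro t
    rw [w3_shift, hC, hS]
    module
  have h4ap : ∀ t, w4 β θ (t + 2*π) = -(w4 β θ t) := by
    intro t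
    rw [w4_shift, hC, hS]
    module
  exact ⟨g_to_sol (hd_w3 hθ2) h3ap, g_to_sol (hd_w4 hθ2) h4ap⟩

lemma m_ne_zero (hβ : 0 < β) (hθpos : 0 < θ) (hθ2 : θ^4 + (β-1)*θ^2 = β*(2*β+3)) :
    β - θ^2 ≠ 0 := by
  intro h
  have h4 : (4:ℝ)*θ^2 = 0 := by linear_combination (-1 : ℝ)*hθ2 - (2*β+θ^2+3)*h
  nlinarith [mul_pos hθpos hθpos]

lemma f34_indep (hβ : 0 < β) (hθpos : 0 < θ) (hθ2 : θ^4 + (β-1)*θ^2 = β*(2*β+3)) :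
    LinearIndependent ℝ ![f3 β θ, f4 β θ] := by
  have hm := m_ne_zero hβ hθpos hθ2
  rw [Fintype.linearIndependent_iff]
  intro d hd
  rw [Fin.sum_univ_two] at hd
  have h0 := congrFun hd 0
  simp only [Matrix.cons_val_zero, Matrix.cons_val_one, Matrix.head_cons, Pi.add_apply,
    Pi.smul_apply, Pi.zero_apply, f3, f4, w3, w4, mul_zero, Real.cos_zero, Real.sin_zero,
    mul_one, Prod.smul_mk, smul_eq_mul, Prod.mk_add_mk, Prod.mk_eq_zero] at h0
  obtain ⟨e1, e2⟩ := h0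
  have hd0 : d 0 = 0 := by
    have : d 0 * (β - θ^2) = 0 := by linarith
    rcases mul_eq_zero.mp this with h | h
    · exact h
    · exact absurd h hm
  have hd1 : d 1 = 0 := by
    have h2 : d 1 * (-(2*θ)) = 0 := by linarith
    rcases mul_eq_zero.mp h2 with h | h
    · exact h
    · have : (0:ℝ) < 2*θ := by positivity
      exfalso; rw [neg_eq_zero] at h; linarith
  intro i
  fin_cases i <;> assumption

lemma finrank_resonant (hβ : 0 < β) (hθpos : 0 < θ) (hrpos : 0 < r)
    (hθ2 : θ^4 + (β-1)*θ^2 = β*(2*β+3)) (hr2 : r^2 = θ^2 + β - 1)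
    (hC : Real.cos (θ*(2*π)) = -1) :
    Set.finrank ℝ (sol β) = 2 := by
  have hsub : sol β ⊆ ↑(Submodule.span ℝ ({f3 β θ, f4 β θ} : Set (ℝ → ℝ × ℝ))) := by
    intro f hf
    obtain ⟨hg, hap⟩ := sol_to_g hf
    obtain ⟨c3, c4, hrep, -⟩ := antiper_coeffs hθ2 hr2 hβ hθpos hrpos hg hap
    have hfe : f = c3 • f3 β θ + c4 • f4 β θ := by
      funext t
      have h1 := hrep t
      have h2 := congrArg Prod.fst h1
      simpa [f3, f4] using h2
    rw [hfe]
    exact Submodule.add_mem _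
      (Submodule.smul_mem _ _ (Submodule.subset_span (by simp)))
      (Submodule.smul_mem _ _ (Submodule.subset_span (by simp)))
  have hmem := f34_mem hθ2 hC
  have hspan : Submodule.span ℝ (sol β) = Submodule.span ℝ ({f3 β θ, f4 β θ} : Set (ℝ → ℝ × ℝ)) := by
    apply le_antisymm
    · exact Submodule.span_le.mpr hsub
    · apply Submodule.span_mono
      rintro x hx
      simp only [Set.mem_insert_iff, Set.mem_singleton_iff] at hx
      rcases hx with rfl | rfl
      · exact hmem.1
      · exact hmem.2
  rw [Set.finrank, hspan]
  have hrange : ({f3 β θ, f4 β θ} : Set (ℝ → ℝ × ℝ)) = Set.range ![f3 β θ, f4 β θ] := by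
    ext x
    simp only [Set.mem_insert_iff, Set.mem_singleton_iff, Set.mem_range]
    constructor
    · rintro (rfl | rfl)
      · exact ⟨0, rfl⟩
      · exact ⟨1, rfl⟩
    · rintro ⟨i, rfl⟩
      fin_cases i
      · exact Or.inl rfl
      · exact Or.inr rfl
  rw [hrange, finrank_span_eq_card (f34_indep hβ hθpos hθ2)]
  simp

lemma finrank_trivial {β : ℝ} (h : sol β ⊆ {0}) : Set.finrank ℝ (sol β) = 0 := by
  have hle : Submodule.span ℝ (sol β) ≤ Submodule.span ℝ ({0} : Set (ℝ → ℝ × ℝ)) :=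
    Submodule.span_mono h
  rw [Submodule.span_zero_singleton] at hle
  have : Submodule.span ℝ (sol β) = ⊥ := le_bot_iff.mp hle
  rw [Set.finrank, this]
  exact finrank_bot ℝ _

lemma sub_zero_nonres (hβ : 0 < β) (hθpos : 0 < θ) (hrpos : 0 < r)
    (hθ2 : θ^4 + (β-1)*θ^2 = β*(2*β+3)) (hr2 : r^2 = θ^2 + β - 1)
    (hC : Real.cos (θ*(2*π)) ≠ -1) :
    sol β ⊆ {0} := by
  intro f hf
  obtain ⟨hg, hap⟩ := sol_to_g hf
  obtain ⟨c3, c4, hrep, hzero⟩ := antiper_coeffs hθ2 hr2 hβ hθpos hrpos hg hap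
  obtain ⟨hc3, hc4⟩ := hzero hC
  have : f = 0 := by
    funext t
    have h1 := hrep t
    rw [hc3, hc4] at h1
    have h2 := congrArg Prod.fst h1
    simpa using h2
  simpa using this

lemma sub_zero_beta0 : sol 0 ⊆ {0} := by
  intro f hf
  obtain ⟨hg, hap⟩ := sol_to_g hf
  have hz := zero_case hg hap
  have : f = 0 := by
    funext t
    have h2 := congrArg Prod.fst (hz t)
    simpa using h2
  simpa using this

end res

lemma resonant_params {n : ℕ} (hn : 1 ≤ n) {θ β : ℝ} (hθdef : θ = (n:ℝ) + 1/2)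
    (hβdef : β = (θ^2 - 3 + Real.sqrt (9*θ^4 - 14*θ^2 + 9))/4) :
    0 < β ∧ θ^4 + (β-1)*θ^2 = β*(2*β+3) ∧ Real.cos (θ*(2*π)) = -1 := by
  have hn1 : (1:ℝ) ≤ (n:ℝ) := by exact_mod_cast hn
  have hθ32 : (3:ℝ)/2 ≤ θ := by rw [hθdef]; linarith
  have hDpos : (θ^2-3)^2 < 9*θ^4 - 14*θ^2 + 9 := by nlinarith
  have hD0 : (0:ℝ) ≤ 9*θ^4 - 14*θ^2 + 9 := le_trans (sq_nonneg _) hDpos.le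
  have hsq : Real.sqrt (9*θ^4 - 14*θ^2 + 9) ^ 2 = 9*θ^4 - 14*θ^2 + 9 := Real.sq_sqrt hD0
  have habs : |θ^2 - 3| < Real.sqrt (9*θ^4 - 14*θ^2 + 9) := by
    rw [← Real.sqrt_sq_eq_abs]
    exact Real.sqrt_lt_sqrt (sq_nonneg _) hDpos
  have hβpos : 0 < β := by
    have h1 : -(θ^2-3) ≤ |θ^2-3| := neg_le_abs _
    rw [hβdef]
    linarith
  have hrel : θ^4 + (β-1)*θ^2 = β*(2*β+3) := by
    have h1 : Real.sqrt (9*θ^4 - 14*θ^2 + 9) = 4*β - θ^2 + 3 := by rw [hβdef]; ring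
    have h2 : (4*β - θ^2 + 3)^2 = 9*θ^4 - 14*θ^2 + 9 := by rw [← h1]; exact hsq
    linear_combination (-1/8 : ℝ) * h2
  have hcos : Real.cos (θ*(2*π)) = -1 := by
    have harg : θ*(2*π) = π + (n:ℤ)*(2*π) := by rw [hθdef]; push_cast; ring
    rw [harg, Real.cos_add_int_mul_two_pi, Real.cos_pi]
  exact ⟨hβpos, hrel, hcos⟩

lemma nonres_params {β : ℝ} (hβ : 0 < β)
    (hnores : ¬∃ n : ℕ, 1 ≤ n ∧
      β = (((n:ℝ) + 1/2)^2 - 3 + Real.sqrt (9*((n:ℝ)+1/2)^4 - 14*((n:ℝ)+1/2)^2 + 9))/4) :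
    ∃ θ r : ℝ, 0 < θ ∧ 0 < r ∧ θ^4 + (β-1)*θ^2 = β*(2*β+3) ∧ r^2 = θ^2 + β - 1 ∧
      Real.cos (θ*(2*π)) ≠ -1 := by
  have hE0 : (0:ℝ) ≤ 9*β^2 + 10*β + 1 := by nlinarith
  have hsqE : Real.sqrt (9*β^2 + 10*β + 1) ^ 2 = 9*β^2 + 10*β + 1 := Real.sq_sqrt hE0
  have habs : |β - 1| < Real.sqrt (9*β^2 + 10*β + 1) := by
    rw [← Real.sqrt_sq_eq_abs]
    apply Real.sqrt_lt_sqrt (sq_nonneg _)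
    nlinarith
  have h1 : β - 1 ≤ |β-1| := le_abs_self _
  have h2 : -(β-1) ≤ |β-1| := neg_le_abs _
  have hν : 0 < (1 - β + Real.sqrt (9*β^2 + 10*β + 1))/2 := by linarith
  have hνr : 0 < (Real.sqrt (9*β^2 + 10*β + 1) + β - 1)/2 := by linarith
  refine ⟨Real.sqrt ((1 - β + Real.sqrt (9*β^2 + 10*β + 1))/2),
    Real.sqrt ((Real.sqrt (9*β^2 + 10*β + 1) + β - 1)/2),
    Real.sqrt_pos.mpr hν, Real.sqrt_pos.mpr hνr, ?_, ?_, ?_⟩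
  case _ =>
    have hθsq : Real.sqrt ((1 - β + Real.sqrt (9*β^2 + 10*β + 1))/2) ^ 2
        = (1 - β + Real.sqrt (9*β^2 + 10*β + 1))/2 := Real.sq_sqrt hν.le
    have hθ4 : Real.sqrt ((1 - β + Real.sqrt (9*β^2 + 10*β + 1))/2) ^ 4
        = ((1 - β + Real.sqrt (9*β^2 + 10*β + 1))/2)^2 := by
      rw [show (4:ℕ) = 2*2 from rfl, pow_mul, hθsq]
    rw [hθ4, hθsq]
    linear_combination (1/4 : ℝ) * hsqE
  case _ =>
    have hθsq : Real.sqrt ((1 - β + Real.sqrt (9*β^2 + 10*β + 1))/2) ^ 2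
        = (1 - β + Real.sqrt (9*β^2 + 10*β + 1))/2 := Real.sq_sqrt hν.le
    have hrsq : Real.sqrt ((Real.sqrt (9*β^2 + 10*β + 1) + β - 1)/2) ^ 2
        = (Real.sqrt (9*β^2 + 10*β + 1) + β - 1)/2 := Real.sq_sqrt hνr.le
    rw [hθsq, hrsq]; ring
  case _ =>
    set θ := Real.sqrt ((1 - β + Real.sqrt (9*β^2 + 10*β + 1))/2) with hθdef
    have hθpos : 0 < θ := Real.sqrt_pos.mpr hν
    have hθsq : θ ^ 2 = (1 - β + Real.sqrt (9*β^2 + 10*β + 1))/2 := Real.sq_sqrt hν.le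
    have hθ2 : θ^4 + (β-1)*θ^2 = β*(2*β+3) := by
      have hθ4 : θ ^ 4 = ((1 - β + Real.sqrt (9*β^2 + 10*β + 1))/2)^2 := by
        rw [show (4:ℕ) = 2*2 from rfl, pow_mul, hθsq]
      rw [hθ4, hθsq]
      linear_combination (1/4 : ℝ) * hsqE
    intro hC
    obtain ⟨k, hk⟩ := Real.cos_eq_neg_one_iff.mp hC
    have hπ : 0 < π := Real.pi_pos
    have hθk : θ = (k:ℝ) + 1/2 := by
      have hz : (θ - ((k:ℝ) + 1/2)) * (2*π) = 0 := by linear_combination -hk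
      rcases mul_eq_zero.mp hz with h | h
      · linarith
      · exfalso; linarith
    have hk0 : 0 ≤ k := by
      by_contra hneg
      push_neg at hneg
      have : (k:ℝ) + 1 ≤ 0 := by exact_mod_cast Int.add_one_le_of_lt hneg
      linarith
    lift k to ℕ using hk0 with m
    by_cases hm : m = 0
    · subst hm
      simp only [Nat.cast_zero, Int.cast_zero] at hθk
      rw [hθk] at hθ2
      nlinarith [hθ2, hβ]
    · apply hnores
      refine ⟨m, Nat.one_le_iff_ne_zero.mpr hm, ?_⟩
      have hθm : θ = (m:ℝ) + 1/2 := by rw [hθk]; push_cast; ring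
      have hDval : (4*β + 3 - θ^2)^2 = 9*θ^4 - 14*θ^2 + 9 := by
        linear_combination (-8 : ℝ) * hθ2
      have hm1 : (1:ℝ) ≤ (m:ℝ) := by
        have : 1 ≤ m := Nat.one_le_iff_ne_zero.mpr hm
        exact_mod_cast this
      have hθ32 : (3:ℝ)/2 ≤ θ := by rw [hθm]; linarith
      have hge : 0 ≤ 4*β + 3 - θ^2 := by
        by_contra hlt
        push_neg at hlt
        have key : (4*β)*(4*β + 6 - 2*θ^2) = 8*θ^2*(θ^2-1) := by linear_combination hDval
        have hθsq2 : (9:ℝ)/4 ≤ θ^2 := by nlinarith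
        have hrhs : 0 < 8*θ^2*(θ^2-1) := by nlinarith
        have hlhs : (4*β)*(4*β + 6 - 2*θ^2) < 0 := by nlinarith
        linarith
      have hsqrt : Real.sqrt (9*θ^4 - 14*θ^2 + 9) = 4*β + 3 - θ^2 := by
        rw [← hDval, Real.sqrt_sq hge]
      rw [← hθm, hsqrt]
      ring

/-- Dimension of the space of `2π`-anti-periodic solutions of the Euler system at `e = 0`:
`2` for `β = β̂_{n+1/2}` with `n ≥ 1`, and `0` otherwise. -/
theorem euler_antiperiodic_solution_dimension (β : ℝ) (hβ : 0 ≤ β) :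
    ((∃ n : ℕ, 1 ≤ n ∧
        β = (((n : ℝ) + 1 / 2) ^ 2 - 3
              + Real.sqrt (9 * ((n : ℝ) + 1 / 2) ^ 4 - 14 * ((n : ℝ) + 1 / 2) ^ 2 + 9)) / 4) →
      Set.finrank ℝ {f : ℝ → ℝ × ℝ | ContDiff ℝ 2 f ∧ (∀ t, f (t + 2 * Real.pi) = -f t) ∧
        ∀ t, (deriv (deriv f) t).1 = (2 * β + 3) * (f t).1 + 2 * (deriv f t).2 ∧
             (deriv (deriv f) t).2 = -β * (f t).2 - 2 * (deriv f t).1} = 2) ∧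
    ((¬∃ n : ℕ, 1 ≤ n ∧
        β = (((n : ℝ) + 1 / 2) ^ 2 - 3
              + Real.sqrt (9 * ((n : ℝ) + 1 / 2) ^ 4 - 14 * ((n : ℝ) + 1 / 2) ^ 2 + 9)) / 4) →
      Set.finrank ℝ {f : ℝ → ℝ × ℝ | ContDiff ℝ 2 f ∧ (∀ t, f (t + 2 * Real.pi) = -f t) ∧
        ∀ t, (deriv (deriv f) t).1 = (2 * β + 3) * (f t).1 + 2 * (deriv f t).2 ∧
             (deriv (deriv f) t).2 = -β * (f t).2 - 2 * (deriv f t).1} = 0) := by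
  constructor
  · rintro ⟨n, hn, hβdef⟩
    have hβdef' : β = (((n:ℝ) + 1/2)^2 - 3
        + Real.sqrt (9*((n:ℝ)+1/2)^4 - 14*((n:ℝ)+1/2)^2 + 9))/4 := by
      exact hβdef
    obtain ⟨hβpos, hθ2, hC⟩ := resonant_params hn rfl hβdef'
    have hn1 : (1:ℝ) ≤ (n:ℝ) := by exact_mod_cast hn
    have hθ32 : (3:ℝ)/2 ≤ (n:ℝ) + 1/2 := by linarith
    have hθpos : (0:ℝ) < (n:ℝ) + 1/2 := by linarith
    have hrr : 0 < ((n:ℝ)+1/2)^2 + β - 1 := by nlinarith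
    have hr2 : Real.sqrt (((n:ℝ)+1/2)^2 + β - 1) ^ 2 = ((n:ℝ)+1/2)^2 + β - 1 :=
      Real.sq_sqrt hrr.le
    have hrpos : 0 < Real.sqrt (((n:ℝ)+1/2)^2 + β - 1) := Real.sqrt_pos.mpr hrr
    exact finrank_resonant hβpos hθpos hrpos hθ2 hr2 hC
  · intro hnores
    rcases eq_or_lt_of_le hβ with heq | hβpos
    · have h0 : sol β ⊆ {0} := by rw [← heq]; exact sub_zero_beta0
      exact finrank_trivial h0
    · obtain ⟨θ, r, hθpos, hrpos, hθ2, hr2, hCne⟩ := nonres_params hβpos hnores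
      exact finrank_trivial (sub_zero_nonres hβpos hθpos hrpos hθ2 hr2 hCne)
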